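/- Let H be a Hopf algebra, δ: H → k a character (algebra homomorphism to the ground field), and σ ∈ H a group-like element. Make k a right H-module via x·h = x δ(h) and a left H-comodule via x ↦ σ ⊗ x. Then k is a right-left anti-Yetter-Drinfeld module (i.e., Δ(x·h) = S(h⁽³⁾)σh⁽¹⁾ ⊗ x·h⁽²⁾ for all h) if and only if the twisted antipode S_δ defined by S_δ(h) = δ(h⁽¹⁾)S(h⁽²⁾) satisfies S_δ(S_δ(h)) = σhσ⁻¹ for all h ∈ H. -/

import Mathlib

open TensorProduct LinearMap Coalgebra

noncomputable section

variable (k : Type) [Field k] (H : Type) [Ring H] [HopfAlgebra k H]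

/-- The twisted antipode `S_δ(h) = δ(h⁽¹⁾)S(h⁽²⁾)`. -/
def twistedAntipode (δ : H →ₐ[k] k) : H →ₗ[k] H :=
  (TensorProduct.lid k H).toLinearMap
    ∘ₗ map δ.toLinearMap (HopfAlgebra.antipode (R := k)) ∘ₗ comul

/-- The right-hand side `S(h⁽³⁾)σh⁽¹⁾ · δ(h⁽²⁾)` of the right-left
anti-Yetter-Drinfeld condition for the one-dimensional module `ᵟk_σ`,
under the identification `H ⊗ k ≅ k ⊗ H ≅ H`. -/
def aydRHSchar (δ : H →ₐ[k] k) (σ : H) : H →ₗ[k] H :=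
  mul' k H ∘ₗ map (mulRight k σ) LinearMap.id
    ∘ₗ (TensorProduct.comm k H H).toLinearMap
    ∘ₗ map LinearMap.id
        ((TensorProduct.lid k H).toLinearMap
          ∘ₗ map δ.toLinearMap (HopfAlgebra.antipode (R := k)))
    ∘ₗ map LinearMap.id comul ∘ₗ comul

section Conv

variable {C A : Type} [AddCommGroup C] [Module k C] [Coalgebra k C]
  [Ring A] [Algebra k A]

/-- Convolution product on linear maps from a coalgebra to an algebra. -/
def conv (f g : C →ₗ[k] A) : C →ₗ[k] A :=
  mul' k A ∘ₗ map f g ∘ₗ comul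

/-- Convolution unit. -/
def cunit : C →ₗ[k] A := Algebra.linearMap k A ∘ₗ counit

lemma conv_repr (f g : C →ₗ[k] A) {c : C} (r : Coalgebra.Repr k c (C × C)) :
    conv k f g c = ∑ i ∈ r.index, f (r.left i) * g (r.right i) := by
  simp only [conv, LinearMap.comp_apply, ← r.eq, map_sum, map_tmul, mul'_apply]

lemma sum_counit_smul {B : Type} [AddCommGroup B] [Module k B] (f : C →ₗ[k] B)
    {a : C} (r : Coalgebra.Repr k a (C × C)) :
    ∑ i ∈ r.index, counit (R := k) (r.left i) • f (r.right i) = f a := by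
  have := Coalgebra.sum_counit_tmul_map_eq (R := k) f a (repr := r)
  apply_fun (TensorProduct.lid k B) at this
  simp only [map_sum, lid_tmul] at this
  simpa using this

lemma sum_smul_counit {B : Type} [AddCommGroup B] [Module k B] (f : C →ₗ[k] B)
    {a : C} (r : Coalgebra.Repr k a (C × C)) :
    ∑ i ∈ r.index, counit (R := k) (r.right i) • f (r.left i) = f a := by
  have := Coalgebra.sum_map_tmul_counit_eq (R := k) f a (repr := r)
  apply_fun (TensorProduct.rid k B) at this
  simp only [map_sum, rid_tmul] at this
  simpa using this

lemma conv_cunit_left (f : C →ₗ[k] A) : conv k (cunit k) f = f := by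
  ext c
  rw [conv_repr k _ _ (ℛ k c)]
  simp only [cunit, LinearMap.comp_apply, Algebra.linearMap_apply, ← Algebra.smul_def]
  exact sum_counit_smul k f _

lemma conv_cunit_right (f : C →ₗ[k] A) : conv k f (cunit k) = f := by
  ext c
  rw [conv_repr k _ _ (ℛ k c)]
  simp only [cunit, LinearMap.comp_apply, Algebra.linearMap_apply]
  have : ∀ i ∈ (ℛ k c).index, f ((ℛ k c).left i) * algebraMap k A (counit ((ℛ k c).right i))
      = counit (R := k) ((ℛ k c).right i) • f ((ℛ k c).left i) := by
    intro i _
    rw [← Algebra.commutes, ← Algebra.smul_def]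
  rw [Finset.sum_congr rfl this]
  exact sum_smul_counit k f _

lemma conv_assoc (f g h : C →ₗ[k] A) :
    conv k (conv k f g) h = conv k f (conv k g h) := by
  ext c
  set r := ℛ k c
  have key := Coalgebra.sum_map_tmul_tmul_eq (R := k) f g h c (repr := r)
    (a₁ := fun i => ℛ k (r.left i)) (a₂ := fun i => ℛ k (r.right i))
  -- contraction x ⊗ (y ⊗ z) ↦ x * (y * z)
  let Θ : A ⊗[k] (A ⊗[k] A) →ₗ[k] A := mul' k A ∘ₗ (mul' k A).lTensor A
  have hΘ : ∀ (x y z : A), Θ (x ⊗ₜ (y ⊗ₜ z)) = x * y * z := by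
    intro x y z; simp [Θ, mul_assoc]
  have := congrArg Θ key
  simp only [map_sum, hΘ] at this
  calc conv k (conv k f g) h c
      = ∑ i ∈ r.index, (conv k f g) (r.left i) * h (r.right i) := conv_repr k _ _ r
    _ = ∑ i ∈ r.index, ∑ j ∈ (ℛ k (r.left i)).index,
          f ((ℛ k (r.left i)).left j) * g ((ℛ k (r.left i)).right j) * h (r.right i) := by
        refine Finset.sum_congr rfl fun i _ => ?_
        rw [conv_repr k f g (ℛ k (r.left i)), Finset.sum_mul]
    _ = ∑ i ∈ r.index, ∑ j ∈ (ℛ k (r.right i)).index,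
          f (r.left i) * g ((ℛ k (r.right i)).left j) * h ((ℛ k (r.right i)).right j) :=
        this.symm
    _ = conv k f (conv k g h) c := by
        rw [conv_repr k _ _ r]
        refine Finset.sum_congr rfl fun i _ => ?_
        rw [conv_repr k g h (ℛ k (r.right i)), Finset.mul_sum]
        exact Finset.sum_congr rfl fun j _ => by rw [mul_assoc]

lemma conv_inv_unique {f g h : C →ₗ[k] A} (h1 : conv k f g = cunit k)
    (h2 : conv k g h = cunit k) : f = h := by
  have : conv k f (conv k g h) = conv k (conv k f g) h := (conv_assoc k f g h).symm
  rw [h2, conv_cunit_right] at this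
  rw [h1, conv_cunit_left] at this
  exact this

end Conv

local notation "S" => HopfAlgebra.antipode (R := k) (A := H)

section Antipode

local notation "μ" => mul' k H

lemma conv_antipode_id : conv k (S) (.id) = cunit k (C := H) (A := H) := by
  ext a
  have h := HopfAlgebra.mul_antipode_rTensor_comul_apply (R := k) (A := H) a
  have : (S).rTensor H = map (S) (.id) := rfl
  rw [this] at h
  simpa [conv, cunit] using h

lemma conv_id_antipode : conv k (.id) (S) = cunit k (C := H) (A := H) := by
  ext a
  have h := HopfAlgebra.mul_antipode_lTensor_comul_apply (R := k) (A := H) a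
  have : (S).lTensor H = map (.id) (S) := rfl
  rw [this] at h
  simpa [conv, cunit] using h

lemma antipode_one : (S) (1 : H) = 1 := by
  have h := HopfAlgebra.mul_antipode_lTensor_comul_apply (R := k) (A := H) 1
  simpa [Algebra.TensorProduct.one_def] using h

/-- comultiplication of the tensor-product coalgebra on a pure tensor -/
lemma comul_tmul (a b : H) :
    comul (R := k) (a ⊗ₜ[k] b) =
      tensorTensorTensorComm k H H H H (comul a ⊗ₜ[k] comul b) := by
  rfl

lemma counit_tmul (a b : H) :
    counit (R := k) (a ⊗ₜ[k] b) = counit (R := k) a * counit (R := k) b := by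
  simp [mul_comm]

/-- `S ∘ μ` is a left convolution inverse of `μ` in `Hom(H⊗H, H)`. -/
lemma conv_Smul_mul : conv k ((S) ∘ₗ μ) (μ) = cunit k (C := H ⊗[k] H) (A := H) := by
  have key : mul' k H ∘ₗ map ((S) ∘ₗ μ) (μ) ∘ₗ
      (tensorTensorTensorComm k H H H H).toLinearMap
      = (mul' k H ∘ₗ map (S) (.id)) ∘ₗ mul' k (H ⊗[k] H) := by
    apply TensorProduct.ext_fourfold'
    intro p q r s
    simp [Algebra.TensorProduct.tmul_mul_tmul]
  apply TensorProduct.ext'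
  intro a b
  have hkey := LinearMap.congr_fun key (comul (R := k) a ⊗ₜ[k] comul (R := k) b)
  simp only [LinearMap.comp_apply] at hkey
  have : conv k ((S) ∘ₗ μ) (μ) (a ⊗ₜ[k] b)
      = (mul' k H ∘ₗ map (S) (.id)) (mul' k (H ⊗[k] H) (comul a ⊗ₜ[k] comul b)) := by
    rw [conv, LinearMap.comp_apply, LinearMap.comp_apply, comul_tmul]
    simp only [LinearMap.comp_apply]
    exact hkey
  rw [this]
  have hmul : mul' k (H ⊗[k] H) (comul (R := k) a ⊗ₜ[k] comul (R := k) b)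
      = comul (R := k) (a * b) := by
    rw [mul'_apply, Bialgebra.comul_mul]
  rw [hmul]
  have h := HopfAlgebra.mul_antipode_rTensor_comul_apply (R := k) (A := H) (a * b)
  have hr : (S).rTensor H = map (S) (.id) := rfl
  rw [hr] at h
  simp only [LinearMap.comp_apply] at h ⊢
  rw [h, cunit, LinearMap.comp_apply, counit_tmul, Bialgebra.counit_mul]
  rfl

/-- `μ ∘ (S ⊗ S) ∘ comm` is a right convolution inverse of `μ`. -/
lemma conv_mul_smul :
    conv k (μ) ((μ) ∘ₗ map (S) (S) ∘ₗ (TensorProduct.comm k H H).toLinearMap)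
      = cunit k (C := H ⊗[k] H) (A := H) := by
  apply TensorProduct.ext'
  intro a b
  set ν : H ⊗[k] H →ₗ[k] H := (μ) ∘ₗ map (S) (S) ∘ₗ (TensorProduct.comm k H H).toLinearMap
  have expand : conv k (μ) ν (a ⊗ₜ[k] b)
      = (mul' k H ∘ₗ map (μ) ν ∘ₗ (tensorTensorTensorComm k H H H H).toLinearMap)
          (comul a ⊗ₜ[k] comul b) := by
    rw [conv, LinearMap.comp_apply, LinearMap.comp_apply, comul_tmul]; rfl
  rw [expand]
  set r := ℛ k a with hr
  rw [← r.eq, TensorProduct.sum_tmul]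
  rw [map_sum]
  -- each term: apply to comul b
  have term : ∀ i ∈ r.index,
      (mul' k H ∘ₗ map (μ) ν ∘ₗ (tensorTensorTensorComm k H H H H).toLinearMap)
        ((r.left i ⊗ₜ[k] r.right i) ⊗ₜ[k] comul (R := k) b)
      = r.left i * algebraMap k H (counit (R := k) b) * (S) (r.right i) := by
    intro i _
    have maps_eq :
        (mul' k H ∘ₗ map (μ) ν ∘ₗ (tensorTensorTensorComm k H H H H).toLinearMap) ∘ₗ
          (TensorProduct.mk k (H ⊗[k] H) (H ⊗[k] H) (r.left i ⊗ₜ[k] r.right i))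
        = mulRight k ((S) (r.right i)) ∘ₗ mulLeft k (r.left i) ∘ₗ mul' k H ∘ₗ (S).lTensor H := by
      apply TensorProduct.ext'
      intro u v
      simp [ν, mul_assoc]
    have := LinearMap.congr_fun maps_eq (comul (R := k) b)
    simp only [LinearMap.comp_apply, TensorProduct.mk_apply] at this
    simp only [LinearMap.comp_apply]
    rw [this, HopfAlgebra.mul_antipode_lTensor_comul_apply]
    simp [mul_assoc]
  rw [Finset.sum_congr rfl term]
  have : ∀ i ∈ r.index, r.left i * algebraMap k H (counit (R := k) b) * (S) (r.right i)
      = counit (R := k) b • (r.left i * (S) (r.right i)) := by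
    intro i _
    rw [← Algebra.commutes, ← Algebra.smul_def, smul_mul_assoc]
  rw [Finset.sum_congr rfl this, ← Finset.smul_sum, HopfAlgebra.sum_mul_antipode_eq_algebraMap_counit]
  rw [cunit, LinearMap.comp_apply, counit_tmul]
  rw [Algebra.linearMap_apply, Algebra.smul_def, ← map_mul, mul_comm]


/-- antipode reverses multiplication (map level) -/
lemma antipode_comp_mul :
    (S) ∘ₗ (μ) = (μ) ∘ₗ map (S) (S) ∘ₗ (TensorProduct.comm k H H).toLinearMap :=
  conv_inv_unique k (conv_Smul_mul k H) (conv_mul_smul k H)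

lemma antipode_mul (a b : H) : (S) (a * b) = (S) b * (S) a := by
  have := LinearMap.congr_fun (antipode_comp_mul k H) (a ⊗ₜ[k] b)
  simpa using this

/-- `comul ∘ S` is a left convolution inverse of `comul` in `Hom(H, H⊗H)`. -/
lemma conv_comulS_comul :
    conv k ((comul (R := k) (A := H)) ∘ₗ (S)) (comul (R := k))
      = cunit k (C := H) (A := H ⊗[k] H) := by
  ext a
  rw [conv_repr k _ _ (ℛ k a)]
  have : ∀ i ∈ (ℛ k a).index,
      ((comul (R := k) (A := H)) ∘ₗ (S)) ((ℛ k a).left i) * comul ((ℛ k a).right i)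
      = comul (R := k) ((S) ((ℛ k a).left i) * (ℛ k a).right i) := by
    intro i _
    rw [Bialgebra.comul_mul]; rfl
  rw [Finset.sum_congr rfl this, ← map_sum, HopfAlgebra.sum_antipode_mul_eq_algebraMap_counit]
  simp [cunit]

/-- `(S ⊗ S) ∘ comm ∘ comul` is a right convolution inverse of `comul`. -/
lemma conv_comul_nu :
    conv k (comul (R := k) (A := H))
      (map (S) (S) ∘ₗ (TensorProduct.comm k H H).toLinearMap ∘ₗ comul)
      = cunit k (C := H) (A := H ⊗[k] H) := by
  ext a
  set νop : H ⊗[k] H →ₗ[k] H ⊗[k] H := map (S) (S) ∘ₗ (TensorProduct.comm k H H).toLinearMap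
    with hνop
  -- key per-element computation
  have claim : ∀ (c : H) (x : H),
      (mul' k (H ⊗[k] H) ∘ₗ map (TensorProduct.mk k H H c) νop) ((comul (R := k)).lTensor H (comul x))
      = (c * (S) x) ⊗ₜ[k] (1 : H) := by
    intro c x
    set G : H ⊗[k] (H ⊗[k] H) →ₗ[k] H ⊗[k] H :=
      mul' k (H ⊗[k] H) ∘ₗ map (TensorProduct.mk k H H c) νop with hG
    rw [← Coalgebra.coassoc_apply (R := k) (A := H) x]
    set rb := ℛ k x with hrb
    rw [← rb.eq]
    -- expand each left component
    have expand : ((comul (R := k)).rTensor H) (∑ j ∈ rb.index, rb.left j ⊗ₜ[k] rb.right j)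
        = ∑ j ∈ rb.index, ∑ l ∈ (ℛ k (rb.left j)).index,
            ((ℛ k (rb.left j)).left l ⊗ₜ[k] (ℛ k (rb.left j)).right l) ⊗ₜ[k] rb.right j := by
      rw [map_sum]
      refine Finset.sum_congr rfl fun j _ => ?_
      rw [rTensor_tmul, ← (ℛ k (rb.left j)).eq, TensorProduct.sum_tmul]
    rw [expand]
    rw [map_sum, map_sum]
    have inner : ∀ j ∈ rb.index,
        G ((TensorProduct.assoc k H H H)
          (∑ l ∈ (ℛ k (rb.left j)).index,
            ((ℛ k (rb.left j)).left l ⊗ₜ[k] (ℛ k (rb.left j)).right l) ⊗ₜ[k] rb.right j))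
        = counit (R := k) (rb.left j) • ((c * (S) (rb.right j)) ⊗ₜ[k] (1 : H)) := by
      intro j _
      rw [map_sum, map_sum]
      have pure : ∀ l ∈ (ℛ k (rb.left j)).index,
          G ((TensorProduct.assoc k H H H)
            (((ℛ k (rb.left j)).left l ⊗ₜ[k] (ℛ k (rb.left j)).right l) ⊗ₜ[k] rb.right j))
          = (c * (S) (rb.right j)) ⊗ₜ[k]
              ((ℛ k (rb.left j)).left l * (S) ((ℛ k (rb.left j)).right l)) := by
        intro l _
        rw [TensorProduct.assoc_tmul]
        simp only [G, hνop, LinearMap.comp_apply, map_tmul, TensorProduct.mk_apply,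
          LinearEquiv.coe_coe, TensorProduct.comm_tmul, mul'_apply,
          Algebra.TensorProduct.tmul_mul_tmul]
      rw [Finset.sum_congr rfl pure, ← TensorProduct.tmul_sum,
        HopfAlgebra.sum_mul_antipode_eq_algebraMap_counit]
      rw [Algebra.algebraMap_eq_smul_one, TensorProduct.tmul_smul]
    rw [Finset.sum_congr rfl inner]
    -- now collapse the counit sum
    have := sum_counit_smul k
      (((TensorProduct.mk k H H).flip 1) ∘ₗ mulLeft k c ∘ₗ (S)) rb
    simp only [LinearMap.comp_apply, mulLeft_apply, LinearMap.flip_apply,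
      TensorProduct.mk_apply] at this
    exact this
  -- now the main computation
  set ν₂ : H →ₗ[k] H ⊗[k] H := νop ∘ₗ comul with hν₂
  have hν₂' : map (S) (S) ∘ₗ (TensorProduct.comm k H H).toLinearMap ∘ₗ comul = ν₂ := by
    rw [hν₂, hνop, LinearMap.comp_assoc]
  rw [hν₂']
  set r := ℛ k a with hrdef
  set Ψ : (H ⊗[k] H) ⊗[k] H →ₗ[k] H ⊗[k] H :=
    mul' k (H ⊗[k] H) ∘ₗ map LinearMap.id ν₂ with hΨ
  have step1 : conv k (comul (R := k) (A := H)) ν₂ a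
      = Ψ ((comul (R := k)).rTensor H (comul a)) := by
    rw [conv_repr k _ _ r, ← r.eq, map_sum, map_sum]
    refine Finset.sum_congr rfl fun i _ => ?_
    simp only [Ψ, rTensor_tmul, LinearMap.comp_apply, map_tmul, LinearMap.id_apply, mul'_apply]
  rw [step1, ← Coalgebra.coassoc_symm_apply (R := k) (A := H) a]
  have step3 : (comul (R := k)).lTensor H (comul a)
      = ∑ i ∈ r.index, r.left i ⊗ₜ[k] comul (R := k) (r.right i) := by
    rw [← r.eq, map_sum]
    exact Finset.sum_congr rfl fun i _ => by rw [lTensor_tmul]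
  rw [step3, map_sum, map_sum]
  have step4 : ∀ i ∈ r.index,
      Ψ ((TensorProduct.assoc k H H H).symm (r.left i ⊗ₜ[k] comul (R := k) (r.right i)))
      = (r.left i * (S) (r.right i)) ⊗ₜ[k] (1 : H) := by
    intro i _
    have mapeq : Ψ ∘ₗ (TensorProduct.assoc k H H H).symm.toLinearMap ∘ₗ
          (TensorProduct.mk k H (H ⊗[k] H)) (r.left i)
        = (mul' k (H ⊗[k] H) ∘ₗ map (TensorProduct.mk k H H (r.left i)) νop) ∘ₗ
            (comul (R := k)).lTensor H := by
      apply TensorProduct.ext'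
      intro e f
      simp only [Ψ, hν₂, LinearMap.comp_apply, TensorProduct.mk_apply, LinearEquiv.coe_coe,
        TensorProduct.assoc_symm_tmul, map_tmul, LinearMap.id_apply, mul'_apply,
        LinearMap.lTensor_tmul]
    have happ := LinearMap.congr_fun mapeq (comul (R := k) (r.right i))
    simp only [LinearMap.comp_apply, TensorProduct.mk_apply, LinearEquiv.coe_coe] at happ
    rw [happ]
    exact claim (r.left i) (r.right i)
  rw [Finset.sum_congr rfl step4, ← TensorProduct.sum_tmul, HopfAlgebra.sum_mul_antipode_eq_algebraMap_counit]
  simp [cunit, Algebra.TensorProduct.algebraMap_apply]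

end Antipode

lemma comul_antipode :
    (comul (R := k) (A := H)) ∘ₗ (S)
      = map (S) (S) ∘ₗ (TensorProduct.comm k H H).toLinearMap ∘ₗ comul :=
  conv_inv_unique k (conv_comulS_comul k H) (conv_comul_nu k H)

lemma comul_antipode_apply (a : H) :
    comul (R := k) ((S) a)
      = map (S) (S) ((TensorProduct.comm k H H) (comul (R := k) a)) := by
  have := LinearMap.congr_fun (comul_antipode k H) a
  simpa using this

section OpConv

/-- Opposite convolution: `(f ⋆ g)(h) = g(h₂) * f(h₁)`. -/
def opconv (f g : H →ₗ[k] H) : H →ₗ[k] H :=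
  mul' k H ∘ₗ (TensorProduct.comm k H H).toLinearMap ∘ₗ map f g ∘ₗ comul

lemma opconv_repr (f g : H →ₗ[k] H) {c : H} (r : Coalgebra.Repr k c (H × H)) :
    opconv k H f g c = ∑ i ∈ r.index, g (r.right i) * f (r.left i) := by
  simp only [opconv, LinearMap.comp_apply, ← r.eq, map_sum, map_tmul,
    LinearEquiv.coe_coe, TensorProduct.comm_tmul, mul'_apply]

lemma opconv_cunit_left (f : H →ₗ[k] H) :
    opconv k H (cunit k (C := H) (A := H)) f = f := by
  ext c
  rw [opconv_repr k H _ _ (ℛ k c)]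
  have : ∀ i ∈ (ℛ k c).index,
      f ((ℛ k c).right i) * cunit k (C := H) (A := H) ((ℛ k c).left i)
      = counit (R := k) ((ℛ k c).left i) • f ((ℛ k c).right i) := by
    intro i _
    simp only [cunit, LinearMap.comp_apply, Algebra.linearMap_apply]
    rw [← Algebra.commutes, ← Algebra.smul_def]
  rw [Finset.sum_congr rfl this]
  exact sum_counit_smul k f _

lemma opconv_cunit_right (f : H →ₗ[k] H) :
    opconv k H f (cunit k (C := H) (A := H)) = f := by
  ext c
  rw [opconv_repr k H _ _ (ℛ k c)]
  have : ∀ i ∈ (ℛ k c).index,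
      cunit k (C := H) (A := H) ((ℛ k c).right i) * f ((ℛ k c).left i)
      = counit (R := k) ((ℛ k c).right i) • f ((ℛ k c).left i) := by
    intro i _
    simp only [cunit, LinearMap.comp_apply, Algebra.linearMap_apply]
    rw [← Algebra.smul_def]
  rw [Finset.sum_congr rfl this]
  exact sum_smul_counit k f _

lemma opconv_assoc (f g h : H →ₗ[k] H) :
    opconv k H (opconv k H f g) h = opconv k H f (opconv k H g h) := by
  ext c
  set r := ℛ k c
  have key := Coalgebra.sum_map_tmul_tmul_eq (R := k) f g h c (repr := r)
    (a₁ := fun i => ℛ k (r.left i)) (a₂ := fun i => ℛ k (r.right i))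
  let Θ : H ⊗[k] (H ⊗[k] H) →ₗ[k] H :=
    mul' k H ∘ₗ map (mul' k H ∘ₗ (TensorProduct.comm k H H).toLinearMap) LinearMap.id
      ∘ₗ (TensorProduct.comm k H (H ⊗[k] H)).toLinearMap
  have hΘ : ∀ (x y z : H), Θ (x ⊗ₜ (y ⊗ₜ z)) = z * y * x := by
    intro x y z; simp [Θ, mul_assoc]
  have key2 := congrArg Θ key
  simp only [map_sum, hΘ] at key2
  calc opconv k H (opconv k H f g) h c
      = ∑ i ∈ r.index, h (r.right i) * (opconv k H f g) (r.left i) :=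
        opconv_repr k H _ _ r
    _ = ∑ i ∈ r.index, ∑ j ∈ (ℛ k (r.left i)).index,
          h (r.right i) * (g ((ℛ k (r.left i)).right j) * f ((ℛ k (r.left i)).left j)) := by
        refine Finset.sum_congr rfl fun i _ => ?_
        rw [opconv_repr k H f g (ℛ k (r.left i)), Finset.mul_sum]
    _ = ∑ i ∈ r.index, ∑ j ∈ (ℛ k (r.left i)).index,
          h (r.right i) * g ((ℛ k (r.left i)).right j) * f ((ℛ k (r.left i)).left j) := by
        exact Finset.sum_congr rfl fun i _ => Finset.sum_congr rfl fun j _ => by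
          rw [mul_assoc]
    _ = ∑ i ∈ r.index, ∑ j ∈ (ℛ k (r.right i)).index,
          h ((ℛ k (r.right i)).right j) * g ((ℛ k (r.right i)).left j) * f (r.left i) :=
        key2.symm
    _ = opconv k H f (opconv k H g h) c := by
        rw [opconv_repr k H _ _ r]
        refine Finset.sum_congr rfl fun i _ => ?_
        rw [opconv_repr k H g h (ℛ k (r.right i)), Finset.sum_mul]

end OpConv

section SinvLemmas

variable (Sinv : H →ₗ[k] H)

lemma Sinv_antipode (hSinv1 : Sinv ∘ₗ (S) = LinearMap.id) (a : H) : Sinv ((S) a) = a :=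
  LinearMap.congr_fun hSinv1 a

lemma antipode_Sinv (hSinv2 : (S) ∘ₗ Sinv = LinearMap.id) (a : H) : (S) (Sinv a) = a :=
  LinearMap.congr_fun hSinv2 a

lemma Sinv_one (hSinv1 : Sinv ∘ₗ (S) = LinearMap.id) : Sinv (1 : H) = 1 := by
  conv_lhs => rw [← antipode_one k H]
  exact Sinv_antipode k H Sinv hSinv1 1

lemma Sinv_mul (hSinv1 : Sinv ∘ₗ (S) = LinearMap.id) (hSinv2 : (S) ∘ₗ Sinv = LinearMap.id)
    (a b : H) : Sinv (a * b) = Sinv b * Sinv a := by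
  have : a * b = (S) (Sinv b * Sinv a) := by
    rw [antipode_mul k H, antipode_Sinv k H Sinv hSinv2, antipode_Sinv k H Sinv hSinv2]
  rw [this, Sinv_antipode k H Sinv hSinv1]

lemma Sinv_algebraMap (hSinv1 : Sinv ∘ₗ (S) = LinearMap.id) (c : k) :
    Sinv (algebraMap k H c) = algebraMap k H c := by
  rw [Algebra.algebraMap_eq_smul_one, map_smul, Sinv_one k H Sinv hSinv1]

lemma opconv_id_Sinv (hSinv1 : Sinv ∘ₗ (S) = LinearMap.id)
    (hSinv2 : (S) ∘ₗ Sinv = LinearMap.id) :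
    opconv k H LinearMap.id Sinv = cunit k (C := H) (A := H) := by
  ext a
  rw [opconv_repr k H _ _ (ℛ k a)]
  have := congrArg Sinv (HopfAlgebra.sum_antipode_mul_eq_algebraMap_counit (R := k) (ℛ k a))
  rw [map_sum, Sinv_algebraMap k H Sinv hSinv1] at this
  have hterm : ∀ i ∈ (ℛ k a).index,
      Sinv ((S) ((ℛ k a).left i) * (ℛ k a).right i)
      = Sinv ((ℛ k a).right i) * (ℛ k a).left i := by
    intro i _
    rw [Sinv_mul k H Sinv hSinv1 hSinv2, Sinv_antipode k H Sinv hSinv1]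
  rw [Finset.sum_congr rfl hterm] at this
  simp only [LinearMap.id_apply]
  rw [this]; simp [cunit]

lemma opconv_Sinv_id (hSinv1 : Sinv ∘ₗ (S) = LinearMap.id)
    (hSinv2 : (S) ∘ₗ Sinv = LinearMap.id) :
    opconv k H Sinv LinearMap.id = cunit k (C := H) (A := H) := by
  ext a
  rw [opconv_repr k H _ _ (ℛ k a)]
  have := congrArg Sinv (HopfAlgebra.sum_mul_antipode_eq_algebraMap_counit (R := k) (ℛ k a))
  rw [map_sum, Sinv_algebraMap k H Sinv hSinv1] at this
  have hterm : ∀ i ∈ (ℛ k a).index,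
      Sinv ((ℛ k a).left i * (S) ((ℛ k a).right i))
      = (ℛ k a).right i * Sinv ((ℛ k a).left i) := by
    intro i _
    rw [Sinv_mul k H Sinv hSinv1 hSinv2, Sinv_antipode k H Sinv hSinv1]
  rw [Finset.sum_congr rfl hterm] at this
  simp only [LinearMap.id_apply]
  rw [this]; simp [cunit]

lemma opconv_cancel (hSinv1 : Sinv ∘ₗ (S) = LinearMap.id)
    (hSinv2 : (S) ∘ₗ Sinv = LinearMap.id) (X Y : H →ₗ[k] H) :
    opconv k H LinearMap.id X = Y ↔ X = opconv k H Sinv Y := by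
  constructor
  · intro h
    rw [← h, ← opconv_assoc, opconv_Sinv_id k H Sinv hSinv1 hSinv2, opconv_cunit_left]
  · intro h
    rw [h, ← opconv_assoc, opconv_id_Sinv k H Sinv hSinv1 hSinv2, opconv_cunit_left]

lemma comul_Sinv_apply (hSinv1 : Sinv ∘ₗ (S) = LinearMap.id)
    (hSinv2 : (S) ∘ₗ Sinv = LinearMap.id) (a : H) :
    comul (R := k) (Sinv a)
      = map Sinv Sinv ((TensorProduct.comm k H H) (comul (R := k) a)) := by
  have h1 : comul (R := k) a = map (S) (S) ((TensorProduct.comm k H H) (comul (R := k) (Sinv a))) := by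
    conv_lhs => rw [← antipode_Sinv k H Sinv hSinv2 a]
    exact comul_antipode_apply k H (Sinv a)
  rw [h1]
  -- comm ∘ map S S = map S S ∘ comm, comm ∘ comm = id, Sinv ∘ S = id
  have comm_nat : ∀ (w : H ⊗[k] H),
      (TensorProduct.comm k H H) (map (S) (S) w) = map (S) (S) ((TensorProduct.comm k H H) w) := by
    intro w
    induction w using TensorProduct.induction_on with
    | zero => simp
    | tmul x y => simp
    | add x y hx hy => simp [map_add, hx, hy]
  rw [comm_nat]
  have comm_comm : (TensorProduct.comm k H H) ((TensorProduct.comm k H H)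
      (comul (R := k) (Sinv a))) = comul (R := k) (Sinv a) := by
    induction comul (R := k) (Sinv a) using TensorProduct.induction_on with
    | zero => simp
    | tmul x y => simp
    | add x y hx hy => simp [map_add, hx, hy]
  rw [comm_comm]
  have collapse : map Sinv Sinv (map (S) (S) (comul (R := k) (Sinv a)))
      = comul (R := k) (Sinv a) := by
    rw [← LinearMap.comp_apply, ← TensorProduct.map_comp, hSinv1, TensorProduct.map_id,
      LinearMap.id_apply]
  rw [collapse]

end SinvLemmas

variable (Sinv : H →ₗ[k] H)

variable (δ : H →ₐ[k] k)

lemma twistedAntipode_repr {a : H} (r : Coalgebra.Repr k a (H × H)) :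
    twistedAntipode k H δ a = ∑ i ∈ r.index, δ (r.left i) • (S) (r.right i) := by
  simp only [twistedAntipode, LinearMap.comp_apply, ← r.eq, map_sum, map_tmul,
    LinearEquiv.coe_coe, TensorProduct.lid_tmul, AlgHom.toLinearMap_apply]

/-- `U = opconv Sinv ηδ`, the compositional inverse of the twisted antipode. -/
def Uδ : H →ₗ[k] H := opconv k H Sinv (Algebra.linearMap k H ∘ₗ δ.toLinearMap)

lemma Uδ_repr {a : H} (r : Coalgebra.Repr k a (H × H)) :
    Uδ k H Sinv δ a = ∑ i ∈ r.index, δ (r.right i) • Sinv (r.left i) := by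
  rw [Uδ, opconv_repr k H _ _ r]
  refine Finset.sum_congr rfl fun i _ => ?_
  simp only [LinearMap.comp_apply, Algebra.linearMap_apply, AlgHom.toLinearMap_apply]
  rw [← Algebra.smul_def]

lemma delta_conv_deltaS {g : H} (rg : Coalgebra.Repr k g (H × H)) :
    ∑ j ∈ rg.index, δ (rg.left j) * δ ((S) (rg.right j)) = counit (R := k) g := by
  have := congrArg δ (HopfAlgebra.sum_mul_antipode_eq_algebraMap_counit (R := k) rg)
  rw [map_sum] at this
  simp only [map_mul, AlgHom.commutes, Algebra.algebraMap_self, RingHom.id_apply] at this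
  exact this

lemma deltaSinv_conv_delta (hSinv1 : Sinv ∘ₗ (S) = LinearMap.id)
    (hSinv2 : (S) ∘ₗ Sinv = LinearMap.id) {g : H} (rg : Coalgebra.Repr k g (H × H)) :
    ∑ j ∈ rg.index, δ (Sinv (rg.left j)) * δ (rg.right j) = counit (R := k) g := by
  have h0 := LinearMap.congr_fun (opconv_Sinv_id k H Sinv hSinv1 hSinv2) g
  rw [opconv_repr k H _ _ rg] at h0
  have := congrArg δ h0
  simp only [map_sum, LinearMap.id_apply, map_mul] at this
  simp only [cunit, LinearMap.comp_apply, Algebra.linearMap_apply] at this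
  rw [show (δ : H →ₐ[k] k) ((algebraMap k H) (counit (R := k) g)) = counit (R := k) g by simp]
    at this
  rw [← this]
  exact Finset.sum_congr rfl fun j _ => mul_comm _ _

lemma U_twistedAntipode (hSinv1 : Sinv ∘ₗ (S) = LinearMap.id)
    (hSinv2 : (S) ∘ₗ Sinv = LinearMap.id) (a : H) :
    Uδ k H Sinv δ (twistedAntipode k H δ a) = a := by
  set r := ℛ k a with hr
  -- U(S g) for any g
  have USg : ∀ g : H, Uδ k H Sinv δ ((S) g)
      = ∑ j ∈ (ℛ k g).index, δ ((S) ((ℛ k g).left j)) • ((ℛ k g).right j) := by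
    intro g
    rw [Uδ, opconv, LinearMap.comp_apply, LinearMap.comp_apply, LinearMap.comp_apply,
      comul_antipode_apply, ← (ℛ k g).eq]
    simp only [map_sum, LinearEquiv.coe_coe, TensorProduct.comm_tmul, map_tmul, mul'_apply,
      LinearMap.comp_apply, Algebra.linearMap_apply, AlgHom.toLinearMap_apply,
      Sinv_antipode k H Sinv hSinv1]
    refine Finset.sum_congr rfl fun j _ => ?_
    rw [← Algebra.smul_def]
  -- expand U(Sδ a)
  rw [twistedAntipode_repr k H δ r, map_sum]
  simp only [map_smul, USg]
  -- the contraction map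
  set Ξ : H ⊗[k] (H ⊗[k] H) →ₗ[k] H :=
    (TensorProduct.lid k H).toLinearMap ∘ₗ map δ.toLinearMap
      ((TensorProduct.lid k H).toLinearMap
        ∘ₗ map (δ.toLinearMap ∘ₗ (S)) LinearMap.id) with hΞ
  have hΞ' : ∀ (x y z : H), Ξ (x ⊗ₜ (y ⊗ₜ z)) = δ x • (δ ((S) y) • z) := by
    intro x y z
    simp [Ξ]
    rw [smul_smul, smul_smul, mul_comm]
  have key := congrArg Ξ (Coalgebra.sum_tmul_tmul_eq (R := k) r
    (fun i => ℛ k (r.left i)) (fun i => ℛ k (r.right i)))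
  simp only [map_sum, hΞ'] at key
  simp only [Finset.smul_sum]
  rw [← key]
  -- collapse left-hand side of key
  have : ∀ i ∈ r.index,
      ∑ j ∈ (ℛ k (r.left i)).index,
        δ ((ℛ k (r.left i)).left j) • (δ ((S) ((ℛ k (r.left i)).right j)) • r.right i)
      = counit (R := k) (r.left i) • r.right i := by
    intro i _
    rw [← delta_conv_deltaS k H δ (ℛ k (r.left i)), Finset.sum_smul]
    exact Finset.sum_congr rfl fun j _ => smul_smul _ _ _
  rw [Finset.sum_congr rfl this]
  exact sum_counit_smul k LinearMap.id r

lemma twistedAntipode_U (hSinv1 : Sinv ∘ₗ (S) = LinearMap.id)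
    (hSinv2 : (S) ∘ₗ Sinv = LinearMap.id) (a : H) :
    twistedAntipode k H δ (Uδ k H Sinv δ a) = a := by
  set r := ℛ k a with hr
  have SdSinv : ∀ g : H, twistedAntipode k H δ (Sinv g)
      = ∑ j ∈ (ℛ k g).index, δ (Sinv ((ℛ k g).right j)) • ((ℛ k g).left j) := by
    intro g
    rw [twistedAntipode, LinearMap.comp_apply, LinearMap.comp_apply,
      comul_Sinv_apply k H Sinv hSinv1 hSinv2, ← (ℛ k g).eq]
    simp only [map_sum, LinearEquiv.coe_coe, TensorProduct.comm_tmul, map_tmul,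
      TensorProduct.lid_tmul, AlgHom.toLinearMap_apply, antipode_Sinv k H Sinv hSinv2]
  -- expand Sδ(U a)
  rw [Uδ_repr k H Sinv δ r, map_sum]
  simp only [map_smul, SdSinv]
  -- the contraction map
  set Ξ : H ⊗[k] (H ⊗[k] H) →ₗ[k] H :=
    (TensorProduct.rid k H).toLinearMap ∘ₗ
      (mul' k k ∘ₗ map (δ.toLinearMap ∘ₗ Sinv) δ.toLinearMap).lTensor H with hΞ
  have hΞ' : ∀ (x y z : H), Ξ (x ⊗ₜ (y ⊗ₜ z)) = (δ (Sinv y) * δ z) • x := by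
    intro x y z
    simp [Ξ]
  have key := congrArg Ξ (Coalgebra.sum_tmul_tmul_eq (R := k) r
    (fun i => ℛ k (r.left i)) (fun i => ℛ k (r.right i)))
  simp only [map_sum, hΞ'] at key
  simp only [Finset.smul_sum]
  have match1 : ∀ i ∈ r.index, ∀ j ∈ (ℛ k (r.left i)).index,
      δ (r.right i) • δ (Sinv ((ℛ k (r.left i)).right j)) • ((ℛ k (r.left i)).left j)
      = (δ (Sinv ((ℛ k (r.left i)).right j)) * δ (r.right i)) • ((ℛ k (r.left i)).left j) := by
    intro i _ j _
    rw [smul_smul, mul_comm]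
  rw [Finset.sum_congr rfl fun i hi => Finset.sum_congr rfl fun j hj => match1 i hi j hj]
  rw [key]
  -- collapse the right-hand side of key
  have : ∀ i ∈ r.index,
      ∑ j ∈ (ℛ k (r.right i)).index,
        (δ (Sinv ((ℛ k (r.right i)).left j)) * δ ((ℛ k (r.right i)).right j)) • r.left i
      = counit (R := k) (r.right i) • r.left i := by
    intro i _
    rw [← Finset.sum_smul, deltaSinv_conv_delta k H Sinv δ hSinv1 hSinv2 (ℛ k (r.right i))]
  rw [Finset.sum_congr rfl this]
  exact sum_smul_counit k LinearMap.id r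

section Sigma
variable (σ : H)

lemma antipodeσ_mul (hσ : comul (R := k) σ = σ ⊗ₜ[k] σ) (hσε : counit (R := k) σ = (1 : k)) :
    (S) σ * σ = 1 := by
  have h := HopfAlgebra.mul_antipode_rTensor_comul_apply (R := k) (A := H) σ
  rw [hσ, hσε] at h
  simpa using h

lemma σ_mul_antipode (hσ : comul (R := k) σ = σ ⊗ₜ[k] σ) (hσε : counit (R := k) σ = (1 : k)) :
    σ * (S) σ = 1 := by
  have h := HopfAlgebra.mul_antipode_lTensor_comul_apply (R := k) (A := H) σ
  rw [hσ, hσε] at h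
  simpa using h

lemma ayd_eq :
    aydRHSchar k H δ σ
      = opconv k H LinearMap.id (mulRight k σ ∘ₗ twistedAntipode k H δ) := by
  ext a
  rw [opconv_repr k H _ _ (ℛ k a)]
  simp only [aydRHSchar, LinearMap.comp_apply, ← (ℛ k a).eq, map_sum, map_tmul,
    LinearMap.id_apply, LinearEquiv.coe_coe, TensorProduct.comm_tmul, mul'_apply,
    mulRight_apply, twistedAntipode]

lemma opconv_mulLeft (f g : H →ₗ[k] H) (c : H) :
    opconv k H f (mulLeft k c ∘ₗ g) = mulLeft k c ∘ₗ opconv k H f g := by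
  ext a
  rw [LinearMap.comp_apply, opconv_repr k H _ _ (ℛ k a), opconv_repr k H _ _ (ℛ k a),
    mulLeft_apply, Finset.mul_sum]
  exact Finset.sum_congr rfl fun i _ => by
    rw [LinearMap.comp_apply, mulLeft_apply, mul_assoc]

end Sigma

theorem statement2
    (Sinv : H →ₗ[k] H)
    (hSinv1 : Sinv ∘ₗ HopfAlgebra.antipode (R := k) = LinearMap.id)
    (hSinv2 : HopfAlgebra.antipode (R := k) ∘ₗ Sinv = LinearMap.id)
    (δ : H →ₐ[k] k) (σ : H)
    (hσ : comul (R := k) σ = σ ⊗ₜ[k] σ) (hσε : counit (R := k) σ = (1 : k)) :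
    -- `ᵟk_σ` is a right-left anti-Yetter-Drinfeld module, i.e.
    -- `Δ(x·h) = S(h⁽³⁾)σh⁽¹⁾ ⊗ x·h⁽²⁾`, identified with an equation in `H`, ...
    (∀ h : H, δ h • σ = aydRHSchar k H δ σ h) ↔
    -- ... iff `(δ,σ)` is a modular pair in involution: `S_δ² = Ad_σ`
    (∀ h : H,
      twistedAntipode k H δ (twistedAntipode k H δ h) =
        σ * h * HopfAlgebra.antipode (R := k) σ) := by
  have hσ1 : (S) σ * σ = 1 := antipodeσ_mul k H σ hσ hσε
  have hσ2 : σ * (S) σ = 1 := σ_mul_antipode k H σ hσ hσε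
  set Sδ := twistedAntipode k H δ with hSδ
  set U := Uδ k H Sinv δ with hU
  set T : H →ₗ[k] H := mulRight k σ ∘ₗ Sδ with hT
  set Tp : H →ₗ[k] H := mulLeft k σ ∘ₗ (Algebra.linearMap k H ∘ₗ δ.toLinearMap) with hTp
  have hTp' : ∀ x : H, Tp x = δ x • σ := by
    intro x
    simp only [Tp, LinearMap.comp_apply, Algebra.linearMap_apply, AlgHom.toLinearMap_apply,
      mulLeft_apply, Algebra.algebraMap_eq_smul_one, mul_smul_comm, mul_one]
  have step1 : (∀ h : H, δ h • σ = aydRHSchar k H δ σ h) ↔ opconv k H LinearMap.id T = Tp := by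
    rw [ayd_eq]
    constructor
    · intro h
      ext x
      rw [hTp', ← h x]
    · intro h x
      rw [← hTp', h]
  have hopTp : opconv k H Sinv Tp = mulLeft k σ ∘ₗ U := by
    rw [hTp]
    exact opconv_mulLeft k H Sinv (Algebra.linearMap k H ∘ₗ δ.toLinearMap) σ
  have iff1 : (∀ h : H, δ h • σ = aydRHSchar k H δ σ h) ↔ (T = mulLeft k σ ∘ₗ U) := by
    rw [← hopTp]
    exact step1.trans (opconv_cancel k H Sinv hSinv1 hSinv2 T Tp)
  have iff2 : (T = mulLeft k σ ∘ₗ U) ↔ (∀ h : H, Sδ h * σ = σ * U h) := by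
    rw [LinearMap.ext_iff]
    exact forall_congr' fun h => by
      simp only [T, LinearMap.comp_apply, mulRight_apply, mulLeft_apply]
  rw [iff1, iff2]
  constructor
  · intro hdag h
    have e1 : Sδ (Sδ h) * σ = σ * h := by
      rw [hdag (Sδ h), hU, hSδ, U_twistedAntipode k H Sinv δ hSinv1 hSinv2 h]
    have : Sδ (Sδ h) * (σ * (S) σ) = σ * h * (S) σ := by
      rw [← mul_assoc, e1]
    rw [hσ2, mul_one] at this
    exact this
  · intro hB h
    have e2 : Sδ (U h) = h := by
      rw [hSδ, hU]
      exact twistedAntipode_U k H Sinv δ hSinv1 hSinv2 h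
    have e3 : Sδ h = σ * U h * (S) σ := by
      conv_lhs => rw [← e2]
      exact hB (U h)
    rw [e3, mul_assoc, mul_assoc, hσ1, mul_one]
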